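/- Let V be a finite set, f : 2^V → ℝ a submodular function with f(∅) = 0, and F ⊆ 2^V a ring family containing ∅ and V that separates points. Then the function f↓ : 2^V → ℝ is submodular with f↓(∅) = 0; moreover f↓(S) ≥ f(Down(S)) for all S ⊆ V, f↓(S) = f(S) for every S ∈ F, and consequently min_{S ⊆ V} f↓(S) = min_{S ∈ F} f(S). -/

import Mathlib

open Finset

noncomputable section
open scoped Classical

variable {V : Type*} [Fintype V] [DecidableEq V]

/-- A set function `f : 2^V → ℝ` is submodular if
`f(X∩Y) + f(X∪Y) ≤ f(X) + f(Y)` for all `X, Y ⊆ V`. -/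
def IsSubmodular (f : Finset V → ℝ) : Prop :=
  ∀ X Y : Finset V, f (X ∩ Y) + f (X ∪ Y) ≤ f X + f Y

/-- The base polytope `B(f)` of a submodular function. -/
def basePolytope (f : Finset V → ℝ) : Set (V → ℝ) :=
  {x | (∀ S : Finset V, ∑ v ∈ S, x v ≤ f S) ∧ (∑ v, x v) = f Finset.univ}

/-- `F ⊆ 2^V` is a ring family containing `∅` and `V`:
closed under union and intersection. -/
def IsRingFamily (F : Set (Finset V)) : Prop :=
  ∅ ∈ F ∧ Finset.univ ∈ F ∧
    (∀ X ∈ F, ∀ Y ∈ F, X ∪ Y ∈ F) ∧ (∀ X ∈ F, ∀ Y ∈ F, X ∩ Y ∈ F)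

/-- `F` separates points: for any distinct `u, v` some member of `F` contains
exactly one of them. -/
def SepPoints (F : Set (Finset V)) : Prop :=
  ∀ u v : V, u ≠ v → ∃ X ∈ F, (u ∈ X ∧ v ∉ X) ∨ (v ∈ X ∧ u ∉ X)

/-- `M(v) = ⋃ {X ∈ F : v ∉ X}`, the largest member of `F` not containing `v`. -/
noncomputable def Mset (F : Set (Finset V)) (v : V) : Finset V :=
  Finset.univ.filter fun u => ∃ X ∈ F, v ∉ X ∧ u ∈ X

/-- `ℓ(v) = f(M(v) ∪ {v}) - f(M(v))`. -/
noncomputable def ell (f : Finset V → ℝ) (F : Set (Finset V)) (v : V) : ℝ :=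
  f (insert v (Mset F v)) - f (Mset F v)

/-- `Down(X) = ⋂ {Y ∈ F : X ⊆ Y}`, the smallest member of `F` containing `X`. -/
noncomputable def DownSet (F : Set (Finset V)) (X : Finset V) : Finset V :=
  Finset.univ.filter fun u => ∀ Y ∈ F, X ⊆ Y → u ∈ Y

/-- `f↓(X) = f(Down(X)) - ℓ⁻(Down(X) \ X)`. -/
noncomputable def fdown (f : Finset V → ℝ) (F : Set (Finset V)) (X : Finset V) : ℝ :=
  f (DownSet F X) - ∑ v ∈ DownSet F X \ X, min (ell f F v) 0

lemma mem_DownSet {F : Set (Finset V)} {X : Finset V} {u : V} :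
    u ∈ DownSet F X ↔ ∀ Y ∈ F, X ⊆ Y → u ∈ Y := by
  simp [DownSet]

lemma subset_DownSet (F : Set (Finset V)) (X : Finset V) : X ⊆ DownSet F X := by
  intro u hu
  exact mem_DownSet.2 fun Y _ hXY => hXY hu

lemma DownSet_subset {F : Set (Finset V)} {X Y : Finset V} (hY : Y ∈ F) (hXY : X ⊆ Y) :
    DownSet F X ⊆ Y := fun u hu => mem_DownSet.1 hu Y hY hXY

private lemma inter_family {F : Set (Finset V)} (hF : IsRingFamily F)
    (T : Finset (Finset V)) (hT : ∀ Y ∈ T, Y ∈ F) :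
    ∃ Z ∈ F, ∀ u : V, u ∈ Z ↔ ∀ Y ∈ T, u ∈ Y := by
  induction T using Finset.induction_on with
  | empty => exact ⟨Finset.univ, hF.2.1, by simp⟩
  | insert a T ha ih =>
    obtain ⟨Z, hZ, hZmem⟩ := ih (fun Y hY => hT Y (mem_insert_of_mem hY))
    refine ⟨a ∩ Z, hF.2.2.2 a (hT a (mem_insert_self a T)) Z hZ, fun u => ?_⟩
    simp [Finset.mem_inter, hZmem, Finset.forall_mem_insert]

private lemma union_family {F : Set (Finset V)} (hF : IsRingFamily F)
    (T : Finset (Finset V)) (hT : ∀ Y ∈ T, Y ∈ F) :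
    ∃ Z ∈ F, ∀ u : V, u ∈ Z ↔ ∃ Y ∈ T, u ∈ Y := by
  induction T using Finset.induction_on with
  | empty => exact ⟨∅, hF.1, by simp⟩
  | insert a T ha ih =>
    obtain ⟨Z, hZ, hZmem⟩ := ih (fun Y hY => hT Y (mem_insert_of_mem hY))
    refine ⟨a ∪ Z, hF.2.2.1 a (hT a (mem_insert_self a T)) Z hZ, fun u => ?_⟩
    simp [Finset.mem_union, hZmem, Finset.exists_mem_insert]

lemma DownSet_mem {F : Set (Finset V)} (hF : IsRingFamily F) (X : Finset V) :
    DownSet F X ∈ F := by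
  obtain ⟨Z, hZ, hZmem⟩ := inter_family hF
    (Finset.univ.filter fun Y => Y ∈ F ∧ X ⊆ Y)
    (fun Y hY => ((Finset.mem_filter.1 hY).2).1)
  have : DownSet F X = Z := by
    ext u
    rw [mem_DownSet, hZmem]
    simp only [Finset.mem_filter, Finset.mem_univ, true_and]
    tauto
  rw [this]; exact hZ

lemma DownSet_eq_of_mem {F : Set (Finset V)} {X : Finset V} (hX : X ∈ F) :
    DownSet F X = X :=
  Finset.Subset.antisymm (DownSet_subset hX (le_refl X)) (subset_DownSet F X)

lemma Mset_mem {F : Set (Finset V)} (hF : IsRingFamily F) (v : V) : Mset F v ∈ F := by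
  obtain ⟨Z, hZ, hZmem⟩ := union_family hF
    (Finset.univ.filter fun Y => Y ∈ F ∧ v ∉ Y)
    (fun Y hY => ((Finset.mem_filter.1 hY).2).1)
  have : Mset F v = Z := by
    ext u
    rw [Mset, Finset.mem_filter]
    rw [hZmem]
    simp only [Finset.mem_filter, Finset.mem_univ, true_and]
    tauto
  rw [this]; exact hZ

lemma not_mem_Mset (F : Set (Finset V)) (v : V) : v ∉ Mset F v := by
  simp only [Mset, Finset.mem_filter, Finset.mem_univ, true_and]
  rintro ⟨X, _, hvX, hvX'⟩
  exact hvX hvX'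

lemma subset_Mset {F : Set (Finset V)} {A : Finset V} {v : V} (hA : A ∈ F) (hv : v ∉ A) :
    A ⊆ Mset F v := by
  intro u hu
  simp only [Mset, Finset.mem_filter, Finset.mem_univ, true_and]
  exact ⟨A, hA, hv, hu⟩
lemma ell_le {f : Finset V → ℝ} (hf : IsSubmodular f) {F : Set (Finset V)}
    {A : Finset V} {v : V} (hA : A ∈ F) (hv : v ∉ A) :
    ell f F v ≤ f (insert v A) - f A := by
  have hsub : A ⊆ Mset F v := subset_Mset hA hv
  have hvM : v ∉ Mset F v := not_mem_Mset F v
  have h := hf (insert v A) (Mset F v)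
  have h1 : (insert v A) ∩ Mset F v = A := by
    ext u
    simp only [Finset.mem_inter, Finset.mem_insert]
    constructor
    · rintro ⟨(rfl | hu), hM⟩
      · exact absurd hM hvM
      · exact hu
    · intro hu
      exact ⟨Or.inr hu, hsub hu⟩
  have h2 : (insert v A) ∪ Mset F v = insert v (Mset F v) := by
    ext u
    simp only [Finset.mem_union, Finset.mem_insert]
    have := @hsub u
    tauto
  rw [h1, h2] at h
  unfold ell
  linarith

lemma chain_ineq {f : Finset V → ℝ} (hf : IsSubmodular f) {F : Set (Finset V)}
    (hF : IsRingFamily F) (hsep : SepPoints F) {B : Finset V} (hB : B ∈ F) :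
    ∀ (n : ℕ) (A : Finset V), A ∈ F → A ⊆ B → (B \ A).card = n →
      f A + ∑ v ∈ B \ A, ell f F v ≤ f B := by
  intro n
  induction n with
  | zero =>
    intro A hA hAB hcard
    have hempty : B \ A = ∅ := Finset.card_eq_zero.mp hcard
    have : A = B :=
      Finset.Subset.antisymm hAB (Finset.sdiff_eq_empty_iff_subset.mp hempty)
    rw [hempty, Finset.sum_empty, this]; linarith
  | succ n ih =>
    intro A hA hAB hcard
    have hne : (B \ A).Nonempty := Finset.card_pos.mp (by omega)
    obtain ⟨v, hvBA, hmin⟩ :=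
      Finset.exists_min_image (B \ A) (fun u => (DownSet F {u}).card) hne
    have hvB : v ∈ B := (Finset.mem_sdiff.1 hvBA).1
    have hvA : v ∉ A := (Finset.mem_sdiff.1 hvBA).2
    -- every element of DownSet F {v} other than v is in A
    have hclaim : ∀ u ∈ DownSet F {v}, u ≠ v → u ∈ A := by
      intro u hu hne'
      by_contra huA
      have huB : u ∈ B := DownSet_subset hB (Finset.singleton_subset_iff.2 hvB) hu
      have huBA : u ∈ B \ A := Finset.mem_sdiff.2 ⟨huB, huA⟩
      have hDuv : DownSet F {u} ⊆ DownSet F {v} :=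
        DownSet_subset (DownSet_mem hF {v}) (Finset.singleton_subset_iff.2 hu)
      have hvDu : v ∉ DownSet F {u} := by
        obtain ⟨X, hX, hcase⟩ := hsep u v hne'
        rcases hcase with ⟨huX, hvX⟩ | ⟨hvX, huX⟩
        · intro hvDu
          exact hvX (DownSet_subset hX (Finset.singleton_subset_iff.2 huX) hvDu)
        · exact absurd (DownSet_subset hX (Finset.singleton_subset_iff.2 hvX) hu) huX
      have hss : DownSet F {u} ⊂ DownSet F {v} :=
        Finset.ssubset_iff_of_subset hDuv |>.2
          ⟨v, subset_DownSet F {v} (Finset.mem_singleton_self v), hvDu⟩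
      have := Finset.card_lt_card hss
      have := hmin u huBA
      omega
    have hins : insert v A = A ∪ DownSet F {v} := by
      ext u
      simp only [Finset.mem_insert, Finset.mem_union]
      constructor
      · rintro (rfl | hu)
        · exact Or.inr (subset_DownSet F {u} (Finset.mem_singleton_self u))
        · exact Or.inl hu
      · rintro (hu | hu)
        · exact Or.inr hu
        · by_cases h : u = v
          · exact Or.inl h
          · exact Or.inr (hclaim u hu h)
    have hinsF : insert v A ∈ F := by
      rw [hins]
      exact hF.2.2.1 A hA _ (DownSet_mem hF {v})
    have hstep : f A + ell f F v ≤ f (insert v A) := by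
      have := ell_le hf hA hvA
      linarith
    have hsub' : insert v A ⊆ B := Finset.insert_subset hvB hAB
    have hsd : B \ insert v A = (B \ A).erase v := by
      ext u
      simp only [Finset.mem_sdiff, Finset.mem_insert, Finset.mem_erase]
      tauto
    have hcard' : (B \ insert v A).card = n := by
      rw [hsd, Finset.card_erase_of_mem hvBA, hcard]; omega
    have hih := ih (insert v A) hinsF hsub' hcard'
    have hsum : ∑ u ∈ (B \ A).erase v, ell f F u + ell f F v = ∑ u ∈ B \ A, ell f F u :=
      Finset.sum_erase_add _ _ hvBA
    rw [hsd] at hih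
    linarith

lemma DownSet_union {F : Set (Finset V)} (hF : IsRingFamily F) (X Y : Finset V) :
    DownSet F (X ∪ Y) = DownSet F X ∪ DownSet F Y := by
  apply Finset.Subset.antisymm
  · apply DownSet_subset (hF.2.2.1 _ (DownSet_mem hF X) _ (DownSet_mem hF Y))
    exact Finset.union_subset_union (subset_DownSet F X) (subset_DownSet F Y)
  · apply Finset.union_subset
    · exact DownSet_subset (DownSet_mem hF (X ∪ Y))
        (Finset.Subset.trans Finset.subset_union_left (subset_DownSet F (X ∪ Y)))
    · exact DownSet_subset (DownSet_mem hF (X ∪ Y))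
        (Finset.Subset.trans Finset.subset_union_right (subset_DownSet F (X ∪ Y)))

lemma sdiff_sum_eq (g : V → ℝ) (S T : Finset V) :
    ∑ v ∈ S \ T, g v = ∑ v ∈ Finset.univ, if v ∈ S ∧ v ∉ T then g v else 0 := by
  rw [← Finset.sum_filter]
  congr 1
  ext v
  simp [Finset.mem_sdiff]


theorem fdown_submodular (f : Finset V → ℝ) (hf : IsSubmodular f) (h0 : f ∅ = 0)
    (F : Set (Finset V)) (hF : IsRingFamily F) (hsep : SepPoints F) :
    IsSubmodular (fdown f F) ∧ fdown f F ∅ = 0 ∧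
    (∀ S : Finset V, f (DownSet F S) ≤ fdown f F S) ∧
    (∀ S ∈ F, fdown f F S = f S) ∧
    sInf {t : ℝ | ∃ S : Finset V, t = fdown f F S} =
      sInf {t : ℝ | ∃ S ∈ F, t = f S} := by
  have hmem : ∀ S ∈ F, fdown f F S = f S := by
    intro S hS
    rw [fdown, DownSet_eq_of_mem hS, Finset.sdiff_self, Finset.sum_empty, sub_zero]
  have hempty : fdown f F ∅ = 0 := by rw [hmem ∅ hF.1, h0]
  have hge : ∀ S : Finset V, f (DownSet F S) ≤ fdown f F S := by
    intro S
    have : ∑ v ∈ DownSet F S \ S, min (ell f F v) 0 ≤ 0 :=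
      Finset.sum_nonpos fun v _ => min_le_right _ _
    rw [fdown]; linarith
  have hsubmod : IsSubmodular (fdown f F) := by
    intro X Y
    set A := DownSet F X with hAdef
    set B := DownSet F Y with hBdef
    set C := DownSet F (X ∩ Y) with hCdef
    have hAF : A ∈ F := DownSet_mem hF X
    have hBF : B ∈ F := DownSet_mem hF Y
    have hCF : C ∈ F := DownSet_mem hF (X ∩ Y)
    have hABF : A ∩ B ∈ F := hF.2.2.2 A hAF B hBF
    have hXA : X ⊆ A := subset_DownSet F X
    have hYB : Y ⊆ B := subset_DownSet F Y
    have hXYC : X ∩ Y ⊆ C := subset_DownSet F (X ∩ Y)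
    have hCA : C ⊆ A := DownSet_subset hAF (Finset.Subset.trans Finset.inter_subset_left hXA)
    have hCB : C ⊆ B := DownSet_subset hBF (Finset.Subset.trans Finset.inter_subset_right hYB)
    have hCAB : C ⊆ A ∩ B := Finset.subset_inter hCA hCB
    have hU : DownSet F (X ∪ Y) = A ∪ B := DownSet_union hF X Y
    -- chain inequality
    have hchain : f C + ∑ v ∈ (A ∩ B) \ C, ell f F v ≤ f (A ∩ B) :=
      chain_ineq hf hF hsep hABF _ C hCF hCAB rfl
    have hminell : ∑ v ∈ (A ∩ B) \ C, min (ell f F v) 0 ≤ ∑ v ∈ (A ∩ B) \ C, ell f F v :=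
      Finset.sum_le_sum fun v _ => min_le_left _ _
    have hsubf : f (A ∩ B) + f (A ∪ B) ≤ f A + f B := hf A B
    -- indicator inequality
    have Smain : ∑ v ∈ A \ X, min (ell f F v) 0 + ∑ v ∈ B \ Y, min (ell f F v) 0 ≤
        ∑ v ∈ (A ∩ B) \ C, min (ell f F v) 0 +
        ∑ v ∈ (A ∪ B) \ (X ∪ Y), min (ell f F v) 0 +
        ∑ v ∈ C \ (X ∩ Y), min (ell f F v) 0 := by
      rw [sdiff_sum_eq, sdiff_sum_eq, sdiff_sum_eq, sdiff_sum_eq, sdiff_sum_eq,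
        ← Finset.sum_add_distrib, ← Finset.sum_add_distrib, ← Finset.sum_add_distrib]
      apply Finset.sum_le_sum
      intro v _
      have hm : min (ell f F v) 0 ≤ 0 := min_le_right _ _
      have h1 : v ∈ X → v ∈ A := fun h => hXA h
      have h2 : v ∈ Y → v ∈ B := fun h => hYB h
      have h3 : v ∈ C → v ∈ A := fun h => hCA h
      have h4 : v ∈ C → v ∈ B := fun h => hCB h
      have h5 : v ∈ X → v ∈ Y → v ∈ C := fun ha hb => hXYC (Finset.mem_inter.2 ⟨ha, hb⟩)
      simp only [Finset.mem_inter, Finset.mem_union]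
      by_cases hx : v ∈ X <;> by_cases hy : v ∈ Y <;> by_cases ha : v ∈ A <;>
        by_cases hb : v ∈ B <;> by_cases hc : v ∈ C <;> simp_all <;> linarith
    show fdown f F (X ∩ Y) + fdown f F (X ∪ Y) ≤ fdown f F X + fdown f F Y
    rw [fdown, fdown, fdown, fdown, hU, ← hAdef, ← hBdef, ← hCdef]
    linarith
  refine ⟨hsubmod, hempty, hge, hmem, ?_⟩
  -- sInf equality
  have hsetA : {t : ℝ | ∃ S : Finset V, t = fdown f F S} = Set.range (fdown f F) := by
    ext t; simp [eq_comm]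
  have hsetB : {t : ℝ | ∃ S ∈ F, t = f S} = f '' F := by
    ext t; simp [eq_comm, Set.mem_image]
  have hfinA : {t : ℝ | ∃ S : Finset V, t = fdown f F S}.Finite := by
    rw [hsetA]; exact Set.finite_range _
  have hfinB : {t : ℝ | ∃ S ∈ F, t = f S}.Finite := by
    rw [hsetB]; exact (Set.toFinite F).image f
  have hneA : {t : ℝ | ∃ S : Finset V, t = fdown f F S}.Nonempty := ⟨fdown f F ∅, ∅, rfl⟩
  have hneB : {t : ℝ | ∃ S ∈ F, t = f S}.Nonempty := ⟨f ∅, ∅, hF.1, rfl⟩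
  apply le_antisymm
  · apply csInf_le_csInf hfinA.bddBelow hneB
    rintro t ⟨S, hS, rfl⟩
    exact ⟨S, (hmem S hS).symm⟩
  · apply le_csInf hneA
    rintro t ⟨S, rfl⟩
    have h1 : f (DownSet F S) ∈ {t : ℝ | ∃ S ∈ F, t = f S} := ⟨DownSet F S, DownSet_mem hF S, rfl⟩
    exact le_trans (csInf_le hfinB.bddBelow h1) (hge S)
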